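/- arXiv:2202.12262 — 3 statements merged into one kernel-verified Lean document; each statement's English description precedes it below -/
import Mathlib

section
/- Let K = {x_1, …, x_n} ⊂ ℝ^d be a finite set of n distinct points and let ψ be a feedforward neural network with depth L ∈ ℕ, widths w_i ∈ ℕ, and continuous nonpolynomial activation functions σ_1,…,σ_L. Identify C(K) with ℝ^n via v ↦ (v(x_1), …, v(x_n)). Then sup over y_T ∈ ℝ^n with |y_T| = 1 of inf over y ∈ Ψ(D) of |y − y_T|² is strictly less than 1, where |·| denotes the Euclidean norm on ℝ^n. -/
open scoped BigOperators ENNReal NNReal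

/-- Parameter space `D` of a feedforward network with `L` hidden layers and width
function `w` (`w 0 = d` is the input dimension, hidden layer `i` has width `w i` for
`i = 1, …, L`, and the output layer has width one). The component for `i : Fin L`
consists of the weight matrix `A_{i+1}` and the bias vector `b_{i+1}`; the last
component consists of the output weights `A_{L+1}` and the output bias `b_{L+1}`. -/
abbrev Params (w : ℕ → ℕ) (L : ℕ) : Type :=
  (∀ i : Fin L, ((Fin (w (i + 1)) → Fin (w i) → ℝ) × (Fin (w (i + 1)) → ℝ))) ×
    ((Fin (w L) → ℝ) × ℝ)

/-- The number of degrees of freedom `m = Σ_{i=1}^{L+1} w_i (w_{i-1} + 1)` of the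
network (with `w_{L+1} = 1`). -/
def mdim (w : ℕ → ℕ) (L : ℕ) : ℕ :=
  (∑ i ∈ Finset.range L, w (i + 1) * (w i + 1)) + (w L + 1)

/-- Output of the first `k` hidden layers of the network. -/
noncomputable def hiddenOut (σ : ℕ → ℝ → ℝ) (w : ℕ → ℕ) (L : ℕ)
    (θ : ∀ i : Fin L, ((Fin (w (i + 1)) → Fin (w i) → ℝ) × (Fin (w (i + 1)) → ℝ))) :
    ∀ k : ℕ, k ≤ L → (Fin (w 0) → ℝ) → Fin (w k) → ℝ
  | 0, _, x => x
  | k + 1, h, x => fun i =>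
      σ (k + 1)
        ((∑ j, (θ ⟨k, h⟩).1 i j * hiddenOut σ w L θ k (Nat.le_of_succ_le h) x j) +
          (θ ⟨k, h⟩).2 i)

/-- The scalar output `ψ(α, x)` of the feedforward network. -/
noncomputable def netFun (σ : ℕ → ℝ → ℝ) (w : ℕ → ℕ) (L : ℕ) (α : Params w L)
    (x : Fin (w 0) → ℝ) : ℝ :=
  (∑ j, α.2.1 j * hiddenOut σ w L α.1 L le_rfl x j) + α.2.2

lemma continuous_hiddenOut {σ : ℕ → ℝ → ℝ} {w : ℕ → ℕ} {L : ℕ}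
    (hσ : ∀ i, 1 ≤ i → i ≤ L → Continuous (σ i))
    (θ : ∀ i : Fin L, ((Fin (w (i + 1)) → Fin (w i) → ℝ) × (Fin (w (i + 1)) → ℝ))) :
    ∀ (k : ℕ) (h : k ≤ L), Continuous fun x => hiddenOut σ w L θ k h x := by
  intro k
  induction k with
  | zero =>
      intro h
      first
        | exact continuous_id
        | (simp only [hiddenOut]; exact continuous_id)
  | succ k ih =>
      intro h
      apply continuous_pi
      intro i
      simp only [hiddenOut]
      exact (hσ (k + 1) (Nat.succ_le_succ (Nat.zero_le _)) h).comp
        ((continuous_finset_sum _ fun j _ =>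
          continuous_const.mul ((continuous_apply j).comp (ih (Nat.le_of_succ_le h)))).add
          continuous_const)

lemma continuous_netFun {σ : ℕ → ℝ → ℝ} {w : ℕ → ℕ} {L : ℕ}
    (hσ : ∀ i, 1 ≤ i → i ≤ L → Continuous (σ i)) (α : Params w L) :
    Continuous fun x => netFun σ w L α x := by
  unfold netFun
  exact (continuous_finset_sum _ fun j _ =>
    continuous_const.mul
      ((continuous_apply j).comp (continuous_hiddenOut hσ α.1 L le_rfl))).add continuous_const

/-- The parameter-to-realization map `Ψ : D → C(K)`. -/
noncomputable def Psi (σ : ℕ → ℝ → ℝ) (w : ℕ → ℕ) (L : ℕ)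
    (hσ : ∀ i, 1 ≤ i → i ≤ L → Continuous (σ i)) (K : Set (Fin (w 0) → ℝ))
    (α : Params w L) : C(K, ℝ) :=
  ⟨fun x => netFun σ w L α x, (continuous_netFun hσ α).comp continuous_subtype_val⟩

/-- The affine function `z_{a,c} : x ↦ aᵀ x + c` as an element of `C(K)`. -/
noncomputable def affineCM {n : ℕ} (K : Set (Fin n → ℝ)) (a : Fin n → ℝ) (c : ℝ) :
    C(K, ℝ) :=
  ⟨fun x => (∑ j, a j * (x : Fin n → ℝ) j) + c,
    (continuous_finset_sum _ fun j _ =>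
      continuous_const.mul ((continuous_apply j).comp continuous_subtype_val)).add
      continuous_const⟩

/-- The constant function `z_c : x ↦ c` as an element of `C(K)`. -/
noncomputable def constCM {n : ℕ} (K : Set (Fin n → ℝ)) (c : ℝ) : C(K, ℝ) :=
  ⟨fun _ => c, continuous_const⟩

/-- A function `ℝ → ℝ` is nonpolynomial if it is not the restriction of a polynomial. -/
def IsNonpolynomial (σ : ℝ → ℝ) : Prop :=
  ¬ ∃ p : Polynomial ℝ, ∀ x : ℝ, σ x = p.eval x

/-- `𝓛` is Gâteaux differentiable in its first argument at `(v, y)` with partial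
derivative (identified with an element of `M(K) = C(K)*`) given by the continuous
linear functional `T`. -/
def HasGateauxDerivFirst {n : ℕ} {K : Set (Fin n → ℝ)}
    (𝓛 : C(K, ℝ) → C(K, ℝ) → ℝ) (v y : C(K, ℝ)) (T : C(K, ℝ) →L[ℝ] ℝ) : Prop :=
  ∀ h : C(K, ℝ), Filter.Tendsto (fun s : ℝ => (𝓛 (v + s • h) y - 𝓛 v y) / s)
    (nhdsWithin 0 (Set.Ioi 0)) (nhds (T h))


open scoped ContDiff Convolution
open MeasureTheory

section AuxProofs

lemma nonconst_of_nonpoly {σ : ℝ → ℝ} (h : IsNonpolynomial σ) : ∃ u v : ℝ, σ u ≠ σ v := by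
  by_contra hc
  push_neg at hc
  exact h ⟨Polynomial.C (σ 0), fun x => by simp [hc x 0]⟩

lemma exists_fiber_interior_empty {σ : ℝ → ℝ} (hc : Continuous σ)
    (hnc : ∃ u v : ℝ, σ u ≠ σ v) : ∃ z : ℝ, interior (σ ⁻¹' {σ z}) = ∅ := by
  by_contra hz
  push_neg at hz
  obtain ⟨u, v, huv⟩ := hnc
  set a := min (σ u) (σ v) with ha
  set b := max (σ u) (σ v) with hb
  have hab : a < b := min_lt_max.mpr huv
  have hsub : Set.Icc a b ⊆ σ '' Set.uIcc u v := by
    have := intermediate_value_uIcc (a := u) (b := v) hc.continuousOn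
    simpa [Set.uIcc, ha, hb] using this
  have hQ : ∀ y ∈ Set.Icc a b, ∃ q : ℚ, (q : ℝ) ∈ σ ⁻¹' {y} := by
    intro y hy
    obtain ⟨zz, _, hzz⟩ := hsub hy
    have hne : (interior (σ ⁻¹' {y})).Nonempty := by
      have := hz zz
      rwa [hzz] at this
    obtain ⟨q, hq⟩ := Rat.denseRange_cast.exists_mem_open isOpen_interior hne
    exact ⟨q, interior_subset hq⟩
  choose Q hQ' using hQ
  have hcnt : (Set.Icc a b).Countable := by
    rw [← Set.countable_coe_iff]
    have : Function.Injective (fun y : Set.Icc a b => Q y y.2) := by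
      intro y₁ y₂ h12
      have e1 : σ (Q y₁ y₁.2) = y₁ := hQ' y₁ y₁.2
      have e2 : σ (Q y₂ y₂.2) = y₂ := hQ' y₂ y₂.2
      ext
      rw [← e1, ← e2]
      exact congrArg (fun q : ℚ => σ (q : ℝ)) h12
    exact this.countable
  have : volume (Set.Icc a b) = 0 := hcnt.measure_zero _
  rw [Real.volume_Icc] at this
  simp only [ENNReal.ofReal_eq_zero] at this
  linarith


lemma exists_good_affine {σ : ℝ → ℝ} (hc : Continuous σ) (hnc : ∃ u v : ℝ, σ u ≠ σ v)
    {n : ℕ} (s : Fin n → ℝ) (k₀ : Fin n) (hs : ∀ j, j ≠ k₀ → s j ≠ s k₀) :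
    ∃ lam mu : ℝ, ∀ j, j ≠ k₀ → σ (s j * lam + mu) ≠ σ (s k₀ * lam + mu) := by
  obtain ⟨z, hz⟩ := exists_fiber_interior_empty hc hnc
  classical
  set B : Fin n → Set ℝ := fun j =>
    if j = k₀ then ∅ else {lam | σ ((s j - s k₀) * lam + z) = σ z} with hB
  have hBclosed : ∀ j, IsClosed (B j) := by
    intro j
    by_cases h : j = k₀
    · simp [hB, h]
    · simp only [hB, if_neg h]
      exact isClosed_singleton.preimage (hc.comp (by continuity))
  have hBint : ∀ j, interior (B j) = ∅ := by
    intro j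
    by_cases h : j = k₀
    · simp [hB, h]
    · have hd : s j - s k₀ ≠ 0 := sub_ne_zero.mpr (hs j h)
      have e : ℝ ≃ₜ ℝ := (Homeomorph.mulLeft₀ (s j - s k₀) hd).trans
        (Homeomorph.addRight z)
      set e' : ℝ ≃ₜ ℝ := (Homeomorph.mulLeft₀ (s j - s k₀) hd).trans
        (Homeomorph.addRight z) with he'
      have hBe : B j = e' ⁻¹' (σ ⁻¹' {σ z}) := by
        simp only [hB, if_neg h]
        rfl
      rw [hBe, ← e'.preimage_interior, hz, Set.preimage_empty]
  have : ¬ (⋃ j, B j) = Set.univ := by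
    intro hcover
    obtain ⟨j, hj⟩ := nonempty_interior_of_iUnion_of_closed hBclosed hcover
    rw [hBint j] at hj
    exact Set.not_nonempty_empty hj
  have : ∃ lam, ∀ j, lam ∉ B j := by
    by_contra hco
    push_neg at hco
    exact this (Set.eq_univ_of_forall fun lam => Set.mem_iUnion.mpr (hco lam))
  obtain ⟨lam, hlam⟩ := this
  refine ⟨lam, z - s k₀ * lam, fun j hj => ?_⟩
  have h1 : s j * lam + (z - s k₀ * lam) = (s j - s k₀) * lam + z := by ring
  have h2 : s k₀ * lam + (z - s k₀ * lam) = z := by ring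
  rw [h1, h2]
  have := hlam j
  simp only [hB, if_neg hj, Set.mem_setOf_eq] at this
  exact this


lemma exists_sep_functional {d n : ℕ} (u : Fin n → (Fin d → ℝ)) (k₀ : Fin n)
    (hu : ∀ j, j ≠ k₀ → u j ≠ u k₀) :
    ∃ a : Fin d → ℝ, ∀ j, j ≠ k₀ → (∑ i, a i * u j i) ≠ (∑ i, a i * u k₀ i) := by
  classical
  set B : Fin n → Set (Fin d → ℝ) := fun j =>
    if j = k₀ then ∅ else {a | ∑ i, a i * (u j i - u k₀ i) = 0} with hB
  have hBclosed : ∀ j, IsClosed (B j) := by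
    intro j
    by_cases h : j = k₀
    · simp [hB, h]
    · simp only [hB, if_neg h]
      exact isClosed_eq (by continuity) continuous_const
  have hBint : ∀ j, interior (B j) = ∅ := by
    intro j
    by_cases h : j = k₀
    · simp [hB, h]
    · simp only [hB, if_neg h]
      by_contra hne
      obtain ⟨a₀, ha₀⟩ := Set.nonempty_iff_ne_empty.mpr hne
      set wv : Fin d → ℝ := fun i => u j i - u k₀ i with hwv
      have hwv0 : wv ≠ 0 := by
        intro h0
        apply hu j h
        funext i
        have := congrFun h0 i
        simp only [hwv, Pi.zero_apply] at this
        linarith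
      have ha₀' : a₀ ∈ {a : Fin d → ℝ | ∑ i, a i * wv i = 0} := interior_subset ha₀
      obtain ⟨ε, hε, hball⟩ := Metric.isOpen_iff.mp isOpen_interior a₀ ha₀
      have hwvp : 0 < ∑ i, wv i ^ 2 := by
        obtain ⟨i₀, hi₀⟩ := Function.ne_iff.mp hwv0
        apply Finset.sum_pos' (fun i _ => sq_nonneg _) ⟨i₀, Finset.mem_univ _,
          lt_of_le_of_ne (sq_nonneg _) (Ne.symm (pow_ne_zero 2 (by simpa using hi₀)))⟩
      set δ : ℝ := ε / (2 * (‖wv‖ + 1)) with hδ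
      have hwnn : (0:ℝ) ≤ ‖wv‖ := norm_nonneg _
      have hδpos : 0 < δ := by positivity
      have hmem : a₀ + δ • wv ∈ Metric.ball a₀ ε := by
        rw [Metric.mem_ball, dist_eq_norm]
        have : a₀ + δ • wv - a₀ = δ • wv := by abel
        rw [this, norm_smul, Real.norm_eq_abs, abs_of_pos hδpos]
        have h2 : δ * (‖wv‖ + 1) = ε / 2 := by
          rw [hδ]
          field_simp
        nlinarith
      have hmem2 : a₀ + δ • wv ∈ {a : Fin d → ℝ | ∑ i, a i * wv i = 0} :=
        interior_subset (hball hmem)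
      simp only [Set.mem_setOf_eq] at ha₀' hmem2
      have hexp : ∑ i, (a₀ + δ • wv) i * wv i
          = (∑ i, a₀ i * wv i) + δ * ∑ i, wv i ^ 2 := by
        rw [Finset.mul_sum, ← Finset.sum_add_distrib]
        refine Finset.sum_congr rfl fun i _ => ?_
        simp only [Pi.add_apply, Pi.smul_apply, smul_eq_mul]
        ring
      rw [hexp, ha₀', zero_add] at hmem2
      have := mul_pos hδpos hwvp
      linarith
  have hnocover : ¬ (⋃ j, B j) = Set.univ := by
    intro hcover
    obtain ⟨j, hj⟩ := nonempty_interior_of_iUnion_of_closed hBclosed hcover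
    rw [hBint j] at hj
    exact Set.not_nonempty_empty hj
  have : ∃ a, ∀ j, a ∉ B j := by
    by_contra hco
    push_neg at hco
    exact hnocover (Set.eq_univ_of_forall fun a => Set.mem_iUnion.mpr (hco a))
  obtain ⟨a, ha⟩ := this
  refine ⟨a, fun j hj hEq => ?_⟩
  have := ha j
  simp only [hB, if_neg hj, Set.mem_setOf_eq] at this
  apply this
  have : ∑ i, a i * (u j i - u k₀ i) = (∑ i, a i * u j i) - ∑ i, a i * u k₀ i := by
    rw [← Finset.sum_sub_distrib]
    exact Finset.sum_congr rfl fun i _ => by ring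
  rw [this, hEq, sub_self]


lemma contDiff_iteratedDeriv {g : ℝ → ℝ} (hg : ContDiff ℝ ∞ g) (m : ℕ) :
    ContDiff ℝ ∞ (iteratedDeriv m g) := by
  rw [iteratedDeriv_eq_iterate]
  exact hg.iterate_deriv m

lemma iteratedDeriv_zero_fun (m : ℕ) : iteratedDeriv m (fun _ : ℝ => (0:ℝ)) = fun _ => 0 := by
  induction m with
  | zero => simp [iteratedDeriv_zero]
  | succ m ih =>
      rw [iteratedDeriv_succ', deriv_const']
      exact ih

lemma iter_sum {n : ℕ} (g : ℝ → ℝ) (hg : ContDiff ℝ ∞ g) (y t : Fin n → ℝ) (b : ℝ) :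
    ∀ m : ℕ, iteratedDeriv m (fun lam => ∑ k, y k * g (t k * lam + b)) =
      fun lam => ∑ k, (y k * t k ^ m) * iteratedDeriv m g (t k * lam + b) := by
  intro m
  induction m with
  | zero => simp [iteratedDeriv_zero]
  | succ m ih =>
      rw [iteratedDeriv_succ, ih]
      funext lam
      have hsm : ContDiff ℝ ∞ (iteratedDeriv m g) := contDiff_iteratedDeriv hg m
      have hterm : ∀ k : Fin n, HasDerivAt
          (fun l => (y k * t k ^ m) * iteratedDeriv m g (t k * l + b))
          ((y k * t k ^ (m+1)) * iteratedDeriv (m+1) g (t k * lam + b)) lam := by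
        intro k
        have hin : HasDerivAt (fun l : ℝ => t k * l + b) (t k) lam := by
          simpa using ((hasDerivAt_id lam).const_mul (t k)).add_const b
        have hout : HasDerivAt (iteratedDeriv m g)
            (deriv (iteratedDeriv m g) (t k * lam + b)) (t k * lam + b) :=
          ((hsm.differentiable (by simp)) _).hasDerivAt
        have := (hout.comp lam hin).const_mul (y k * t k ^ m)
        refine this.congr_deriv ?_
        rw [iteratedDeriv_succ]
        ring
      have := HasDerivAt.fun_sum (u := Finset.univ) (fun k _ => hterm k)
      simpa using this.deriv

lemma poly_coeff_of_iteratedDeriv_eq_zero :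
    ∀ (m : ℕ) (g : ℝ → ℝ), ContDiff ℝ ∞ g → (∀ x, iteratedDeriv m g x = 0) →
      ∃ a : ℕ → ℝ, ∀ x, g x = ∑ i ∈ Finset.range m, a i * x ^ i := by
  intro m
  induction m with
  | zero =>
      intro g _ h
      exact ⟨fun _ => 0, fun x => by simpa using h x⟩
  | succ m ih =>
      intro g hg h
      have hg' : ContDiff ℝ ∞ (deriv g) := (contDiff_infty_iff_deriv.mp hg).2
      have h' : ∀ x, iteratedDeriv m (deriv g) x = 0 := by
        intro x
        have := h x
        rwa [iteratedDeriv_succ'] at this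
      obtain ⟨a, ha⟩ := ih (deriv g) hg' h'
      set G : ℝ → ℝ := fun x => ∑ i ∈ Finset.range m, (a i / (i+1)) * x ^ (i+1) with hG
      have hGd : ∀ x, HasDerivAt G (deriv g x) x := by
        intro x
        have : HasDerivAt G (∑ i ∈ Finset.range m, (a i / (i+1)) * ((i+1) * x ^ i)) x :=
          HasDerivAt.fun_sum (u := Finset.range m) fun i _ => by
            simpa using (hasDerivAt_pow (i+1) x).const_mul (a i / (i+1))
        convert this using 1
        rw [ha x]
        refine Finset.sum_congr rfl fun i _ => ?_
        have : ((i:ℝ)+1) ≠ 0 := by positivity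
        push_cast
        field_simp
      have hgd : Differentiable ℝ g := hg.differentiable (by simp)
      have hconst : ∀ x, g x - G x = g 0 - G 0 := by
        intro x
        apply is_const_of_deriv_eq_zero (f := fun x => g x - G x)
        · exact fun z => ((hgd z).sub (hGd z).differentiableAt)
        · intro z
          rw [deriv_fun_sub (hgd z) (hGd z).differentiableAt, (hGd z).deriv, sub_self]
      refine ⟨fun i => if i = 0 then g 0 - G 0 else a (i-1) / i, fun x => ?_⟩
      have hx : g x = (g 0 - G 0) + G x := by
        have := hconst x
        linarith
      rw [hx, hG]
      rw [Finset.sum_range_succ' (fun i => (if i = 0 then g 0 - G 0 else a (i-1)/i) * x ^ i) m]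
      simp only [if_pos rfl, Nat.add_sub_cancel, pow_zero, mul_one]
      rw [add_comm]
      congr 1
      refine Finset.sum_congr rfl fun i _ => ?_
      simp only [Nat.succ_ne_zero, if_neg]
      push_cast
      ring


lemma discriminatory (hc : Continuous σ) (hnp : IsNonpolynomial σ)
    {n : ℕ} (t y : Fin n → ℝ) (k₀ : Fin n) (ht : ∀ j, j ≠ k₀ → t j ≠ t k₀)
    (h : ∀ lam b : ℝ, ∑ k, y k * σ (t k * lam + b) = 0) : y k₀ = 0 := by
  classical
  by_cases hall : ∀ m : ℕ, ∑ k, y k * t k ^ m = 0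
  · -- Vandermonde-type argument gives the conclusion directly
    set S : Finset ℝ := (Finset.univ.erase k₀).image t with hS
    set q : Polynomial ℝ := ∏ s ∈ S, (Polynomial.X - Polynomial.C s) with hq
    have hqk₀ : q.eval (t k₀) ≠ 0 := by
      rw [hq, Polynomial.eval_prod]
      rw [Finset.prod_ne_zero_iff]
      intro s hsS
      simp only [Polynomial.eval_sub, Polynomial.eval_X, Polynomial.eval_C]
      obtain ⟨j, hj, rfl⟩ := Finset.mem_image.mp hsS
      exact sub_ne_zero.mpr (Ne.symm (ht j (Finset.ne_of_mem_erase hj)))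
    have hzero : ∀ j, j ≠ k₀ → q.eval (t j) = 0 := by
      intro j hj
      rw [hq, Polynomial.eval_prod]
      apply Finset.prod_eq_zero (Finset.mem_image_of_mem t (Finset.mem_erase.mpr ⟨hj, Finset.mem_univ _⟩))
      simp
    have hA : ∑ k, y k * q.eval (t k) = y k₀ * q.eval (t k₀) :=
      Finset.sum_eq_single_of_mem k₀ (Finset.mem_univ _)
        (fun j _ hj => by rw [hzero j hj, mul_zero])
    have hB : ∑ k, y k * q.eval (t k) = 0 := by
      have : ∀ k : Fin n, y k * q.eval (t k)
          = ∑ i ∈ Finset.range (q.natDegree + 1), q.coeff i * (y k * t k ^ i) := by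
        intro k
        rw [Polynomial.eval_eq_sum_range, Finset.mul_sum]
        exact Finset.sum_congr rfl fun i _ => by ring
      rw [Finset.sum_congr rfl fun k _ => this k, Finset.sum_comm]
      apply Finset.sum_eq_zero
      intro i _
      rw [← Finset.mul_sum, hall i, mul_zero]
    rw [hA] at hB
    exact (mul_eq_zero.mp hB).resolve_right hqk₀
  · push_neg at hall
    obtain ⟨m, hm⟩ := hall
    exfalso
    -- mollifiers
    have hrpos : ∀ j : ℕ, (0:ℝ) < 1/(j+1) := fun j => by positivity
    set φ : ℕ → ContDiffBump (0:ℝ) := fun j =>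
      ⟨1/(j+1), 2/(j+1), hrpos j, by
        have h1 : (0:ℝ) < (j:ℝ)+1 := by positivity
        rw [div_lt_div_iff₀ h1 h1]
        nlinarith⟩ with hφ
    set G : ℕ → ℝ → ℝ := fun j =>
      (φ j).normed volume ⋆[ContinuousLinearMap.lsmul ℝ ℝ, volume] σ with hG
    have hsmooth : ∀ j, ContDiff ℝ ∞ (G j) := fun j =>
      HasCompactSupport.contDiff_convolution_left _
        (φ j).hasCompactSupport_normed (φ j).contDiff_normed (hc.locallyIntegrable)
    have hGzero : ∀ (j : ℕ) (lam b : ℝ), ∑ k, y k * G j (t k * lam + b) = 0 := by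
      intro j lam b
      have hint : ∀ k : Fin n, Integrable
          (fun s => (φ j).normed volume s * (y k * σ (t k * lam + (b - s)))) volume := by
        intro k
        apply Continuous.integrable_of_hasCompactSupport
        · exact ((φ j).continuous_normed).mul
            (continuous_const.mul (hc.comp (by continuity)))
        · exact ((φ j).hasCompactSupport_normed).mul_right
      have hconv : ∀ k : Fin n, G j (t k * lam + b)
          = ∫ s, (φ j).normed volume s * σ (t k * lam + (b - s)) := by
        intro k
        show ((φ j).normed volume ⋆[ContinuousLinearMap.lsmul ℝ ℝ, volume] σ)
          (t k * lam + b) = _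
        rw [convolution_def]
        congr 1
        funext s
        simp only [ContinuousLinearMap.lsmul_apply, smul_eq_mul]
        congr 2
        ring
      calc ∑ k, y k * G j (t k * lam + b)
          = ∑ k, ∫ s, (φ j).normed volume s * (y k * σ (t k * lam + (b - s))) := by
            refine Finset.sum_congr rfl fun k _ => ?_
            rw [hconv k, ← integral_const_mul]
            congr 1
            funext s
            ring
        _ = ∫ s, ∑ k, (φ j).normed volume s * (y k * σ (t k * lam + (b - s))) :=
            (integral_finset_sum _ fun k _ => hint k).symm
        _ = ∫ _ : ℝ, (0:ℝ) := by
            congr 1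
            funext s
            rw [← Finset.mul_sum, h lam (b - s), mul_zero]
        _ = 0 := integral_zero _ _
    have hGder : ∀ (j : ℕ) (bb : ℝ), iteratedDeriv m (G j) bb = 0 := by
      intro j bb
      have h0 : (fun lam => ∑ k, y k * G j (t k * lam + bb)) = fun _ => (0:ℝ) :=
        funext fun lam => hGzero j lam bb
      have h1 := iter_sum (G j) (hsmooth j) y t bb m
      rw [h0, iteratedDeriv_zero_fun] at h1
      have h2 := congrFun h1.symm 0
      simp only [mul_zero, zero_add] at h2
      have h3 : ∑ k, y k * t k ^ m * iteratedDeriv m (G j) bb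
          = (∑ k, y k * t k ^ m) * iteratedDeriv m (G j) bb := by
        rw [Finset.sum_mul]
      rw [h3] at h2
      exact (mul_eq_zero.mp h2).resolve_left hm
    -- each G j is a polynomial of degree < m
    have hpoly : ∀ j : ℕ, ∃ a : ℕ → ℝ, ∀ x, G j x = ∑ i ∈ Finset.range m, a i * x ^ i :=
      fun j => poly_coeff_of_iteratedDeriv_eq_zero m (G j) (hsmooth j) (hGder j)
    -- Lagrange interpolation nodes
    set sF : Finset ℝ := (Finset.range m).image (Nat.cast : ℕ → ℝ) with hsF
    have hcard : sF.card = m := by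
      rw [hsF, Finset.card_image_of_injective _ Nat.cast_injective, Finset.card_range]
    have hinj : Set.InjOn id (sF : Set ℝ) := Set.injOn_id _
    have hrepr : ∀ (j : ℕ) (x : ℝ), G j x
        = ∑ i ∈ sF, G j i * (Lagrange.basis sF id i).eval x := by
      intro j x
      obtain ⟨a, ha⟩ := hpoly j
      set p : Polynomial ℝ := ∑ i ∈ Finset.range m, Polynomial.C (a i) * Polynomial.X ^ i with hp
      have hpeval : ∀ z : ℝ, p.eval z = G j z := by
        intro z
        rw [hp, Polynomial.eval_finset_sum, ha z]
        exact Finset.sum_congr rfl fun i _ => by simp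
      have hpdeg : p.degree < sF.card := by
        rw [hcard, hp]
        apply lt_of_le_of_lt (Polynomial.degree_sum_le _ _)
        rw [Finset.sup_lt_iff (by exact_mod_cast WithBot.bot_lt_coe m)]
        intro i hi
        apply lt_of_le_of_lt (Polynomial.degree_C_mul_X_pow_le i (a i))
        exact_mod_cast Finset.mem_range.mp hi
      have hpint : p = Lagrange.interpolate sF id (G j) :=
        Lagrange.eq_interpolate_of_eval_eq (r := G j) hinj hpdeg (fun i _ => hpeval i)
      calc G j x = p.eval x := (hpeval x).symm
        _ = ∑ i ∈ sF, G j i * (Lagrange.basis sF id i).eval x := by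
            rw [hpint, Lagrange.interpolate_apply, Polynomial.eval_finset_sum]
            exact Finset.sum_congr rfl fun i _ => by
              rw [Polynomial.eval_mul, Polynomial.eval_C]
    -- take limits
    have hrout : Filter.Tendsto (fun j : ℕ => (φ j).rOut) Filter.atTop (nhds 0) := by
      have h1 : Filter.Tendsto (fun j : ℕ => ((j:ℝ)+1)) Filter.atTop Filter.atTop :=
        Filter.tendsto_atTop_add_const_right _ 1 tendsto_natCast_atTop_atTop
      have := Filter.Tendsto.div_atTop (tendsto_const_nhds (x := (2:ℝ))) h1
      simpa [hφ] using this
    have hlim : ∀ x : ℝ, Filter.Tendsto (fun j => G j x) Filter.atTop (nhds (σ x)) := by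
      intro x
      exact ContDiffBump.convolution_tendsto_right_of_continuous hrout hc x
    apply hnp
    refine ⟨Lagrange.interpolate sF id σ, fun x => ?_⟩
    have hlim2 : Filter.Tendsto (fun j => G j x) Filter.atTop
        (nhds (∑ i ∈ sF, σ i * (Lagrange.basis sF id i).eval x)) := by
      have : ∀ j : ℕ, G j x = ∑ i ∈ sF, G j i * (Lagrange.basis sF id i).eval x :=
        fun j => hrepr j x
      rw [funext this]
      exact tendsto_finset_sum _ fun i _ => (hlim i).mul_const _
    have := tendsto_nhds_unique (hlim x) hlim2
    rw [this, Lagrange.interpolate_apply, Polynomial.eval_finset_sum]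
    exact Finset.sum_congr rfl fun i _ => by rw [Polynomial.eval_mul, Polynomial.eval_C]


lemma hiddenOut_congr {σ : ℕ → ℝ → ℝ} {w : ℕ → ℕ} {L : ℕ}
    (θ θ' : ∀ i : Fin L, ((Fin (w (i + 1)) → Fin (w i) → ℝ) × (Fin (w (i + 1)) → ℝ))) :
    ∀ (k : ℕ) (h : k ≤ L), (∀ i : Fin L, (i : ℕ) < k → θ i = θ' i) →
      hiddenOut σ w L θ k h = hiddenOut σ w L θ' k h := by
  intro k
  induction k with
  | zero => intro h _; rfl
  | succ k ih =>
      intro h hθ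
      funext xx i
      have hk : θ ⟨k, h⟩ = θ' ⟨k, h⟩ := hθ ⟨k, h⟩ (Nat.lt_succ_self k)
      simp only [hiddenOut]
      rw [hk, ih (Nat.le_of_succ_le h) (fun i hi => hθ i (Nat.lt_succ_of_lt hi))]

lemma sep_hidden {σ : ℕ → ℝ → ℝ} {w : ℕ → ℕ} {L : ℕ}
    (hw : ∀ i, 1 ≤ i → i ≤ L → 0 < w i)
    (hσ : ∀ i, 1 ≤ i → i ≤ L → Continuous (σ i))
    (hσnp : ∀ i, 1 ≤ i → i ≤ L → IsNonpolynomial (σ i))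
    {n : ℕ} (x : Fin n → (Fin (w 0) → ℝ)) (hx : Function.Injective x) (k₀ : Fin n) :
    ∀ (m : ℕ) (hm : m ≤ L), ∃ θ, ∀ j, j ≠ k₀ →
      hiddenOut σ w L θ m hm (x j) ≠ hiddenOut σ w L θ m hm (x k₀) := by
  intro m
  induction m with
  | zero =>
      intro hm
      refine ⟨fun i => (fun _ _ => 0, fun _ => 0), fun j hj => ?_⟩
      show x j ≠ x k₀
      exact fun hEq => hj (hx hEq)
  | succ m ih =>
      intro hm
      obtain ⟨θ, hθ⟩ := ih (Nat.le_of_succ_le hm)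
      set v : Fin n → Fin (w m) → ℝ :=
        fun k => hiddenOut σ w L θ m (Nat.le_of_succ_le hm) (x k) with hv
      obtain ⟨a, ha⟩ := exists_sep_functional v k₀ hθ
      have h1m : 1 ≤ m + 1 := Nat.succ_le_succ (Nat.zero_le m)
      obtain ⟨lam, mu, hlm⟩ := exists_good_affine (hσ (m+1) h1m hm)
        (nonconst_of_nonpoly (hσnp (m+1) h1m hm))
        (fun k => ∑ i, a i * v k i) k₀ ha
      classical
      set θ' := Function.update θ ⟨m, hm⟩
        ((fun _ j' => a j' * lam, fun _ => mu) :
          (Fin (w (m+1)) → Fin (w m) → ℝ) × (Fin (w (m+1)) → ℝ)) with hθ'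
      have hsame : hiddenOut σ w L θ' m (Nat.le_of_succ_le hm)
          = hiddenOut σ w L θ m (Nat.le_of_succ_le hm) := by
        apply hiddenOut_congr
        intro i hi
        rw [hθ', Function.update_of_ne]
        intro hEq
        rw [hEq] at hi
        simp at hi
      have hθ'm : θ' ⟨m, hm⟩ = ((fun _ j' => a j' * lam, fun _ => mu) :
          (Fin (w (m+1)) → Fin (w m) → ℝ) × (Fin (w (m+1)) → ℝ)) := by
        rw [hθ', Function.update_self]
      have hval : ∀ k : Fin n, hiddenOut σ w L θ' (m+1) hm (x k)
          = fun _ : Fin (w (m+1)) => σ (m+1) ((∑ i, a i * v k i) * lam + mu) := by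
        intro k
        funext i
        show σ (m+1) ((∑ j', (θ' ⟨m, hm⟩).1 i j' *
          hiddenOut σ w L θ' m (Nat.le_of_succ_le hm) (x k) j') + (θ' ⟨m, hm⟩).2 i) = _
        rw [hθ'm, hsame]
        congr 1
        simp only []
        rw [Finset.sum_mul]
        congr 1
        · exact Finset.sum_congr rfl fun j' _ => by rw [hv]; ring
      refine ⟨θ', fun j hj hEq => ?_⟩
      have hi0 : (0 : ℕ) < w (m+1) := hw (m+1) h1m hm
      have := congrFun hEq ⟨0, hi0⟩
      rw [hval j, hval k₀] at this
      exact hlm j hj this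


lemma discr_deep {w : ℕ → ℕ} {L : ℕ} (hL : 0 < L)
    (hw : ∀ i, 1 ≤ i → i ≤ L → 0 < w i)
    {σ : ℕ → ℝ → ℝ} (hσ : ∀ i, 1 ≤ i → i ≤ L → Continuous (σ i))
    (hσnp : ∀ i, 1 ≤ i → i ≤ L → IsNonpolynomial (σ i))
    {n : ℕ} (x : Fin n → (Fin (w 0) → ℝ)) (hx : Function.Injective x)
    (y : Fin n → ℝ) (hy : ∀ α : Params w L, ∑ k, y k * netFun σ w L α (x k) = 0) :
    y = 0 := by
  classical
  cases L with
  | zero => exact absurd hL (lt_irrefl 0)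
  | succ M =>
    funext k₀
    show y k₀ = 0
    obtain ⟨θ, hθ⟩ := sep_hidden hw hσ hσnp x hx k₀ M (Nat.le_succ M)
    set v : Fin n → Fin (w M) → ℝ :=
      fun k => hiddenOut σ w (M+1) θ M (Nat.le_succ M) (x k) with hv
    obtain ⟨a, ha⟩ := exists_sep_functional v k₀ hθ
    set t : Fin n → ℝ := fun k => ∑ i, a i * v k i with htdef
    have h1M : 1 ≤ M + 1 := Nat.succ_le_succ (Nat.zero_le M)
    have hi0 : (0 : ℕ) < w (M+1) := hw (M+1) h1M le_rfl
    set i₀ : Fin (w (M+1)) := ⟨0, hi0⟩ with hi₀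
    have key : ∀ lam b : ℝ, ∑ k, y k * σ (M+1) (t k * lam + b) = 0 := by
      intro lam b
      set θ' := Function.update θ ⟨M, Nat.lt_succ_self M⟩
        ((fun _ j' => a j' * lam, fun _ => b) :
          (Fin (w (M+1)) → Fin (w M) → ℝ) × (Fin (w (M+1)) → ℝ)) with hθ'
      have hsame : hiddenOut σ w (M+1) θ' M (Nat.le_succ M)
          = hiddenOut σ w (M+1) θ M (Nat.le_succ M) := by
        apply hiddenOut_congr
        intro i hi
        rw [hθ', Function.update_of_ne]
        intro hEq
        rw [hEq] at hi
        simp at hi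
      have hθ'M : θ' ⟨M, Nat.lt_succ_self M⟩ = ((fun _ j' => a j' * lam, fun _ => b) :
          (Fin (w (M+1)) → Fin (w M) → ℝ) × (Fin (w (M+1)) → ℝ)) := by
        rw [hθ', Function.update_self]
      have hval : ∀ k : Fin n, ∀ i : Fin (w (M+1)),
          hiddenOut σ w (M+1) θ' (M+1) le_rfl (x k) i = σ (M+1) (t k * lam + b) := by
        intro k i
        show σ (M+1) ((∑ j', (θ' ⟨M, Nat.lt_succ_self M⟩).1 i j' *
          hiddenOut σ w (M+1) θ' M (Nat.le_succ M) (x k) j')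
            + (θ' ⟨M, Nat.lt_succ_self M⟩).2 i) = _
        rw [hθ'M, hsame]
        congr 1
        simp only []
        rw [htdef, Finset.sum_mul]
        congr 1
        exact Finset.sum_congr rfl fun j' _ => by rw [hv]; ring
      set c : Fin (w (M+1)) → ℝ := fun j => if j = i₀ then 1 else 0 with hcdef
      have := hy (θ', (c, 0))
      have hnf : ∀ k : Fin n, netFun σ w (M+1) (θ', (c, 0)) (x k)
          = σ (M+1) (t k * lam + b) := by
        intro k
        show (∑ j, c j * hiddenOut σ w (M+1) θ' (M+1) le_rfl (x k) j) + 0 = _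
        rw [add_zero]
        have : ∀ j : Fin (w (M+1)), c j * hiddenOut σ w (M+1) θ' (M+1) le_rfl (x k) j
            = if j = i₀ then σ (M+1) (t k * lam + b) else 0 := by
          intro j
          rw [hval k j, hcdef]
          by_cases hj : j = i₀
          · simp [hj]
          · simp [hj]
        rw [Finset.sum_congr rfl fun j _ => this j, Finset.sum_ite_eq' Finset.univ i₀]
        simp
      rw [Finset.sum_congr rfl fun k _ => by rw [hnf k]] at this
      exact this
    exact discriminatory (hσ (M+1) h1M le_rfl) (hσnp (M+1) h1M le_rfl) t y k₀ ha key


lemma netFun_scale (σ : ℕ → ℝ → ℝ) (w : ℕ → ℕ) (L : ℕ) (α : Params w L) (r : ℝ)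
    (pt : Fin (w 0) → ℝ) :
    netFun σ w L (α.1, (fun j => r * α.2.1 j, r * α.2.2)) pt = r * netFun σ w L α pt := by
  show (∑ j, (r * α.2.1 j) * hiddenOut σ w L α.1 L le_rfl pt j) + r * α.2.2 = _
  rw [netFun, mul_add, Finset.mul_sum]
  congr 1
  exact Finset.sum_congr rfl fun j _ => by ring

end AuxProofs

/-- **Improved expressiveness (Remark 4.3).** For a finite training set
`K = {x_1, …, x_n}` of distinct points and a feedforward network with continuous
nonpolynomial activations, identifying `C(K) ≅ ℝ^n` via `v ↦ (v(x_1), …, v(x_n))`,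
the supremum over unit vectors `y_T ∈ ℝ^n` of the infimum over `y ∈ Ψ(D)` of
`|y - y_T|²` is strictly less than one. -/
theorem improved_expressiveness_on_finite_sets
    (w : ℕ → ℕ) (L : ℕ) (hL : 0 < L) (hw0 : 0 < w 0) (hw : ∀ i, 1 ≤ i → i ≤ L → 0 < w i)
    (σ : ℕ → ℝ → ℝ)
    (hσ : ∀ i, 1 ≤ i → i ≤ L → Continuous (σ i))
    (hσnp : ∀ i, 1 ≤ i → i ≤ L → IsNonpolynomial (σ i))
    (n : ℕ) (hn : 0 < n)
    (x : Fin n → (Fin (w 0) → ℝ)) (hx : Function.Injective x) :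
    sSup {s : ℝ | ∃ yT : EuclideanSpace ℝ (Fin n), ‖yT‖ = 1 ∧
      s = sInf {t : ℝ | ∃ α : Params w L,
        t = ‖(show EuclideanSpace ℝ (Fin n) from WithLp.toLp 2 (fun k => netFun σ w L α (x k))) - yT‖ ^ 2}} < 1 := by
  classical
  set vec : Params w L → EuclideanSpace ℝ (Fin n) :=
    fun α => WithLp.toLp 2 (fun k => netFun σ w L α (x k)) with hvec
  set S : Set (EuclideanSpace ℝ (Fin n)) := Set.range vec with hSdef
  have hSne : S.Nonempty := ⟨vec ((fun _ => (fun _ _ => 0, fun _ => 0), (fun _ => 0, 0))),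
    Set.mem_range_self _⟩
  set F : EuclideanSpace ℝ (Fin n) → ℝ := fun y => Metric.infDist y S with hF
  have hFcont : Continuous F := Metric.continuous_infDist_pt S
  have hFnn : ∀ y, 0 ≤ F y := fun y => Metric.infDist_nonneg
  -- key pointwise bound
  have key : ∀ y : EuclideanSpace ℝ (Fin n), ‖y‖ = 1 → F y < 1 := by
    intro y hy
    have hyne : (fun k => y k) ≠ (0 : Fin n → ℝ) := by
      intro h0
      have : y = 0 := by ext k; simpa using congrFun h0 k
      rw [this, norm_zero] at hy
      norm_num at hy
    have : ¬ (∀ α : Params w L, ∑ k, y k * netFun σ w L α (x k) = 0) := by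
      intro hall
      exact hyne (discr_deep hL hw hσ hσnp x hx _ hall)
    push_neg at this
    obtain ⟨α, hα⟩ := this
    set u : EuclideanSpace ℝ (Fin n) := vec α with hu
    set c : ℝ := ∑ k, y k * u k with hcdef
    have hc : c ≠ 0 := hα
    have hune : u ≠ 0 := by
      intro h0
      apply hc
      rw [hcdef]
      apply Finset.sum_eq_zero
      intro k _
      rw [h0]
      show y k * (0 : EuclideanSpace ℝ (Fin n)) k = 0
      simp
    have hnu : (0:ℝ) < ‖u‖ ^ 2 := by
      have := norm_pos_iff.mpr hune
      positivity
    set r : ℝ := c / ‖u‖ ^ 2 with hr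
    set v : EuclideanSpace ℝ (Fin n) := r • u with hvdef
    have hvS : v ∈ S := by
      refine ⟨(α.1, (fun j => r * α.2.1 j, r * α.2.2)), ?_⟩
      ext k
      show netFun σ w L _ (x k) = (r • u) k
      rw [netFun_scale]
      rfl
    have hinner : (inner ℝ y u : ℝ) = c := by
      rw [hcdef]
      rw [PiLp.inner_apply]
      exact Finset.sum_congr rfl fun k _ => by
        simp [RCLike.inner_apply, mul_comm]
    have hsq : ‖y - v‖ ^ 2 = 1 - c ^ 2 / ‖u‖ ^ 2 := by
      rw [hvdef, norm_sub_sq_real, real_inner_smul_right, hinner, hy, norm_smul,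
        Real.norm_eq_abs, mul_pow, sq_abs, hr]
      field_simp
      ring
    have hd2 : ‖y - v‖ ^ 2 < 1 := by
      rw [hsq]
      have : 0 < c ^ 2 / ‖u‖ ^ 2 := by positivity
      linarith
    have hd : ‖y - v‖ < 1 := by
      nlinarith [norm_nonneg (y - v)]
    calc F y ≤ dist y v := Metric.infDist_le_dist_of_mem hvS
      _ = ‖y - v‖ := by rw [dist_eq_norm]
      _ < 1 := hd
  -- compactness over the sphere
  have hcomp : IsCompact (Metric.sphere (0 : EuclideanSpace ℝ (Fin n)) 1) :=
    isCompact_sphere 0 1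
  have hsne : (Metric.sphere (0 : EuclideanSpace ℝ (Fin n)) 1).Nonempty := by
    refine ⟨EuclideanSpace.single ⟨0, hn⟩ (1:ℝ), ?_⟩
    rw [mem_sphere_zero_iff_norm, EuclideanSpace.norm_single]
    norm_num
  obtain ⟨ystar, hymem, hymax'⟩ := hcomp.exists_isMaxOn hsne hFcont.continuousOn
  have hymax : ∀ z ∈ Metric.sphere (0 : EuclideanSpace ℝ (Fin n)) 1, F z ≤ F ystar :=
    fun z hz => hymax' hz
  have hystar : F ystar < 1 := key ystar (mem_sphere_zero_iff_norm.mp hymem)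
  have hM0 : 0 ≤ F ystar := hFnn ystar
  have hMlt : F ystar ^ 2 < 1 := by nlinarith
  -- bound every element of the set
  refine lt_of_le_of_lt (Real.sSup_le ?_ (by positivity)) hMlt
  rintro s ⟨yT, hyT, rfl⟩
  set T : Set ℝ := {t : ℝ | ∃ α : Params w L, t = ‖vec α - yT‖ ^ 2} with hT
  have hTbdd : BddBelow T := ⟨0, fun tt ⟨α, htt⟩ => htt ▸ sq_nonneg _⟩
  have hstep : ∀ ε : ℝ, 0 < ε → sInf T ≤ (F yT + ε) ^ 2 := by
    intro ε hε
    have h1 : Metric.infDist yT S < F yT + ε := by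
      have := hFnn yT
      simp only [hF] at *
      linarith
    obtain ⟨vv, hvvS, hvvd⟩ := (Metric.infDist_lt_iff hSne).mp h1
    obtain ⟨α, rfl⟩ := hvvS
    have hmem : ‖vec α - yT‖ ^ 2 ∈ T := ⟨α, rfl⟩
    have : ‖vec α - yT‖ ^ 2 ≤ (F yT + ε) ^ 2 := by
      have hd : ‖vec α - yT‖ < F yT + ε := by
        rw [← dist_eq_norm, dist_comm]
        exact hvvd
      have h0 : (0:ℝ) ≤ ‖vec α - yT‖ := norm_nonneg _
      nlinarith
    exact le_trans (csInf_le hTbdd hmem) this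
  have hinf : sInf T ≤ F yT ^ 2 := by
    have htend : Filter.Tendsto (fun ε : ℝ => (F yT + ε) ^ 2)
        (nhdsWithin 0 (Set.Ioi 0)) (nhds (F yT ^ 2)) := by
      have : Filter.Tendsto (fun ε : ℝ => (F yT + ε) ^ 2) (nhds 0) (nhds ((F yT + 0) ^ 2)) := by
        apply Filter.Tendsto.pow
        exact (continuous_const.add continuous_id).tendsto 0
      rw [add_zero] at this
      exact this.mono_left nhdsWithin_le_nhds
    refine ge_of_tendsto htend ?_
    filter_upwards [self_mem_nhdsWithin] with ε hε
    exact hstep ε hε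
  calc sInf T ≤ F yT ^ 2 := hinf
    _ ≤ F ystar ^ 2 := by
        have := hymax yT (mem_sphere_zero_iff_norm.mpr hyT)
        nlinarith [hFnn yT]
end

section
/- Let K ⊂ ℝ^d be a nonempty compact set and let ψ be a feedforward neural network with depth L ∈ ℕ, widths w_i ∈ ℕ, and continuous activation functions σ_i such that each σ_i, i = 1,…,L, is affine and nonconstant on some nonempty open interval I_i ⊂ ℝ. Then for every ā ∈ ℝ^d and c̄ ∈ ℝ there exist a parameter ᾱ ∈ D and a radius r > 0 such that ψ(ᾱ, x) = āᵀx + c̄ for all x ∈ K and such that for every α in the open ball of radius r around ᾱ in D the function Ψ(α) is affine on K, i.e., there exist a ∈ ℝ^d, c ∈ ℝ with ψ(α, x) = aᵀx + c for all x ∈ K. -/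
open scoped BigOperators ENNReal NNReal

lemma isOpen_forall_mem_compact {X Y : Type*} [TopologicalSpace X] [TopologicalSpace Y]
    {K : Set Y} (hK : IsCompact K) {f : X → Y → ℝ}
    (hf : Continuous fun p : X × Y => f p.1 p.2) {U : Set ℝ} (hU : IsOpen U) :
    IsOpen {a : X | ∀ y ∈ K, f a y ∈ U} := by
  rw [isOpen_iff_mem_nhds]
  intro a ha
  have hsub : ({a} : Set X) ×ˢ K ⊆ (fun p : X × Y => f p.1 p.2) ⁻¹' U := by
    rintro ⟨a', y⟩ ⟨ha', hy⟩
    rcases ha' with rfl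
    exact ha _ hy
  obtain ⟨u, v, hu, _, hau, hKv, huv⟩ :=
    generalized_tube_lemma isCompact_singleton hK (hU.preimage hf) hsub
  refine Filter.mem_of_superset (hu.mem_nhds (hau rfl)) ?_
  intro a' ha' y hy
  exact huv (Set.mk_mem_prod ha' (hKv hy))

lemma continuous_hiddenOut_pair {σ : ℕ → ℝ → ℝ} {w : ℕ → ℕ} {L : ℕ}
    (hσ : ∀ i, 1 ≤ i → i ≤ L → Continuous (σ i)) :
    ∀ (k : ℕ) (h : k ≤ L),
      Continuous fun p :
        (∀ i : Fin L, ((Fin (w (i + 1)) → Fin (w i) → ℝ) × (Fin (w (i + 1)) → ℝ))) ×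
          (Fin (w 0) → ℝ) => hiddenOut σ w L p.1 k h p.2 := by
  intro k
  induction k with
  | zero => intro h; simpa [hiddenOut] using (continuous_snd :
      Continuous fun p : (∀ i : Fin L,
          ((Fin (w (i + 1)) → Fin (w i) → ℝ) × (Fin (w (i + 1)) → ℝ))) ×
          (Fin (w 0) → ℝ) => p.2)
  | succ k ih =>
      intro h
      apply continuous_pi
      intro i
      simp only [hiddenOut]
      refine (hσ (k + 1) (Nat.succ_le_succ (Nat.zero_le _)) h).comp (Continuous.add ?_ ?_)
      · refine continuous_finset_sum _ fun j _ => Continuous.mul ?_ ?_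
        · exact (continuous_apply j).comp ((continuous_apply i).comp
            (((continuous_apply (⟨k, h⟩ : Fin L)).comp continuous_fst).fst))
        · exact (continuous_apply j).comp (ih (Nat.le_of_succ_le h))
      · exact (continuous_apply i).comp
          (((continuous_apply (⟨k, h⟩ : Fin L)).comp continuous_fst).snd)

lemma sum_affine {n m : ℕ} (A : Fin n → ℝ) (a : Fin n → Fin m → ℝ) (c : Fin n → ℝ)
    (x : Fin m → ℝ) :
    ∑ j, A j * ((∑ j', a j j' * x j') + c j)
      = (∑ j', (∑ j, A j * a j j') * x j') + ∑ j, A j * c j := by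
  simp only [mul_add, Finset.sum_add_distrib, Finset.mul_sum, Finset.sum_mul]
  rw [Finset.sum_comm]
  simp [mul_assoc]

/-- **Construction in Lemma 4.4.** If every activation function is continuous and
affine and nonconstant on some nonempty open interval, then every affine function
`x ↦ āᵀx + c̄` is realized on `K` by a parameter `ᾱ ∈ D` such that all parameters in
some open ball around `ᾱ` also realize affine functions on `K`. -/
theorem affine_realization_locally_affine
    (w : ℕ → ℕ) (L : ℕ) (hL : 0 < L) (hw0 : 0 < w 0) (hw : ∀ i, 1 ≤ i → i ≤ L → 0 < w i)
    (σ : ℕ → ℝ → ℝ)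
    (hσ : ∀ i, 1 ≤ i → i ≤ L → Continuous (σ i))
    (haff : ∀ i, 1 ≤ i → i ≤ L → ∃ s t β γ : ℝ, s < t ∧ β ≠ 0 ∧
      ∀ x ∈ Set.Ioo s t, σ i x = β * x + γ)
    (K : Set (Fin (w 0) → ℝ)) (hKne : K.Nonempty) (hKc : IsCompact K)
    (abar : Fin (w 0) → ℝ) (cbar : ℝ) :
    ∃ (ᾱ : Params w L) (r : ℝ), 0 < r ∧
      (∀ x ∈ K, netFun σ w L ᾱ x = (∑ j, abar j * x j) + cbar) ∧
      ∀ α ∈ Metric.ball ᾱ r, ∃ (a : Fin (w 0) → ℝ) (c : ℝ),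
        ∀ x ∈ K, netFun σ w L α x = (∑ j, a j * x j) + c := by
    classical
  obtain ⟨L', rfl⟩ : ∃ n, L = n + 1 := ⟨L - 1, (Nat.succ_pred_eq_of_pos hL).symm⟩
  have haff' : ∀ i : ℕ, ∃ s t β γ : ℝ, s < t ∧ β ≠ 0 ∧
      (1 ≤ i → i ≤ L' + 1 → ∀ x ∈ Set.Ioo s t, σ i x = β * x + γ) := by
    intro i
    by_cases h : 1 ≤ i ∧ i ≤ L' + 1
    · obtain ⟨s, t, β, γ, hst, hβ, hval⟩ := haff i h.1 h.2
      exact ⟨s, t, β, γ, hst, hβ, fun _ _ => hval⟩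
    · exact ⟨0, 1, 1, 0, one_pos, one_ne_zero, fun h1 h2 => absurd ⟨h1, h2⟩ h⟩
  choose s t β γ hst hβ hsig using haff'
  set μ : ℕ → ℝ := fun i => (s i + t i) / 2 with hμdef
  set δ : ℕ → ℝ := fun i => (t i - s i) / 2 with hδdef
  have hδpos : ∀ i, 0 < δ i := fun i => by
    have := hst i; simp only [hδdef]; linarith
  obtain ⟨x₀, hx₀K, hx₀⟩ := hKc.exists_isMaxOn hKne
    (((continuous_finset_sum Finset.univ fun j _ =>
      continuous_const.mul (continuous_apply j)).abs).continuousOn)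
  set M : ℝ := |∑ j, abar j * x₀ j| with hMdef
  have hMb : ∀ x ∈ K, |∑ j, abar j * x j| ≤ M := fun x hx => hx₀ hx
  have hM0 : 0 ≤ M := abs_nonneg _
  set ε : ℕ → ℝ := fun i => δ i / (M + 1) with hεdef
  have hεpos : ∀ i, 0 < ε i := fun i => div_pos (hδpos i) (by linarith)
  have hmem : ∀ k, ∀ x ∈ K, ε k * (∑ j, abar j * x j) + μ k ∈ Set.Ioo (s k) (t k) := by
    intro k x hx
    have h1 : |ε k * (∑ j, abar j * x j)| < δ k := by
      rw [abs_mul, abs_of_pos (hεpos k)]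
      have h2 : ε k * |∑ j, abar j * x j| ≤ ε k * M :=
        mul_le_mul_of_nonneg_left (hMb x hx) (hεpos k).le
      have h3 : ε k * M < ε k * (M + 1) := by nlinarith [hεpos k]
      have h4 : ε k * (M + 1) = δ k := by
        simp only [hεdef]
        field_simp
      linarith
    rw [abs_lt] at h1
    have hs : s k = μ k - δ k := by simp only [hμdef, hδdef]; ring
    have ht : t k = μ k + δ k := by simp only [hμdef, hδdef]; ring
    exact ⟨by rw [hs]; linarith [h1.1], by rw [ht]; linarith [h1.2]⟩
  set q : ℕ → ℝ := fun i => β i * μ i + γ i with hqdef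
  set p : ℕ → ℝ := fun i => β i * ε i with hpdef
  have hp : ∀ i, p i ≠ 0 := fun i => mul_ne_zero (hβ i) (hεpos i).ne'
  have hwne : ∀ k, k ≤ L' + 1 → (w k : ℝ) ≠ 0 := by
    intro k hk
    rcases Nat.eq_zero_or_pos k with rfl | hk0
    · exact Nat.cast_ne_zero.mpr hw0.ne'
    · exact Nat.cast_ne_zero.mpr (hw k hk0 hk).ne'
  set η : ℕ → ℝ := fun k => ε (k + 1) / ((w k : ℝ) * p k) with hηdef
  set θbar : ∀ i : Fin (L' + 1),
      ((Fin (w (i + 1)) → Fin (w i) → ℝ) × (Fin (w (i + 1)) → ℝ)) := fun i =>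
    if h : (i : ℕ) = 0 then
      (fun _ j => ε 1 * abar (Fin.cast (congrArg w h) j), fun _ => μ 1)
    else
      (fun _ _ => η i, fun _ => μ ((i : ℕ) + 1) - η i * (w i : ℝ) * q i) with hθdef
  set ᾱ : Params w (L' + 1) :=
    ⟨θbar, (fun _ => ((w (L' + 1) : ℝ) * p (L' + 1))⁻¹, cbar - q (L' + 1) / p (L' + 1))⟩
    with hᾱdef
  -- the pre-activation computation at the special parameter
  have hpre : ∀ k (hk : k < L' + 1) (x : Fin (w 0) → ℝ), x ∈ K → ∀ i : Fin (w (k + 1)),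
      (∑ j, (θbar ⟨k, hk⟩).1 i j * hiddenOut σ w (L' + 1) θbar k hk.le x j) +
        (θbar ⟨k, hk⟩).2 i = ε (k + 1) * (∑ j', abar j' * x j') + μ (k + 1) := by
    intro k
    induction k with
    | zero =>
        intro hk x hx i
        have hθ0 : θbar ⟨0, hk⟩ =
            (fun _ j => ε 1 * abar (Fin.cast (congrArg w rfl) j), fun _ => μ 1) := by
          simp only [hθdef]
          rw [dif_pos trivial]
        rw [hθ0]
        simp only [hiddenOut]
        rw [Finset.mul_sum]
        congr 1
        refine Finset.sum_congr rfl fun j _ => ?_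
        rw [show abar (Fin.cast (congrArg w rfl) j) = abar j from rfl]
        ring
    | succ k ih =>
        intro hk x hx i
        have hkL : k < L' + 1 := Nat.lt_of_succ_lt hk
        have hout : ∀ j, hiddenOut σ w (L' + 1) θbar (k + 1) hk.le x j
            = p (k + 1) * (∑ j', abar j' * x j') + q (k + 1) := by
          intro j
          simp only [hiddenOut]
          rw [ih hkL x hx j]
          rw [hsig (k + 1) (by omega) (by omega) _ (hmem (k + 1) x hx)]
          simp only [hpdef, hqdef]
          ring
        have hθk : θbar ⟨k + 1, hk⟩ = (fun _ _ => η (k + 1),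
            fun _ => μ (k + 2) - η (k + 1) * (w (k + 1) : ℝ) * q (k + 1)) := by
          simp only [hθdef]
          rw [dif_neg (Nat.succ_ne_zero k)]
        rw [hθk]
        simp only [hout]
        rw [Finset.sum_const, Finset.card_univ, Fintype.card_fin, nsmul_eq_mul]
        have hw1 : (w (k + 1) : ℝ) ≠ 0 := hwne (k + 1) (by omega)
        have hkey : η (k + 1) * ((w (k + 1) : ℝ) * p (k + 1)) = ε (k + 2) := by
          simp only [hηdef]
          exact div_mul_cancel₀ _ (mul_ne_zero hw1 (hp _))
        linear_combination (∑ j', abar j' * x j') * hkey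
  -- hidden output at the top layer for the special parameter
  have houtL : ∀ x ∈ K, ∀ j, hiddenOut σ w (L' + 1) θbar (L' + 1) le_rfl x j
      = p (L' + 1) * (∑ j', abar j' * x j') + q (L' + 1) := by
    intro x hx j
    simp only [hiddenOut]
    rw [hpre L' (Nat.lt_succ_self L') x hx j]
    rw [hsig (L' + 1) (by omega) (by omega) _ (hmem (L' + 1) x hx)]
    simp only [hpdef, hqdef]
    ring
  have hreal : ∀ x ∈ K, netFun σ w (L' + 1) ᾱ x = (∑ j, abar j * x j) + cbar := by
    intro x hx
    simp only [netFun, hᾱdef]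
    rw [Finset.sum_congr rfl fun j _ => by rw [houtL x hx j]]
    rw [Finset.sum_const, Finset.card_univ, Fintype.card_fin, nsmul_eq_mul]
    have hw1 : (w (L' + 1) : ℝ) ≠ 0 := hwne (L' + 1) le_rfl
    have hp1 : p (L' + 1) ≠ 0 := hp _
    field_simp
    ring
  -- the good open set
  set G : Set (Params w (L' + 1)) := {α | ∀ (k : Fin (L' + 1)) (i : Fin (w ((k : ℕ) + 1))),
    ∀ x ∈ K, (∑ j, (α.1 k).1 i j * hiddenOut σ w (L' + 1) α.1 (k : ℕ) k.2.le x j) +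
      (α.1 k).2 i ∈ Set.Ioo (s ((k : ℕ) + 1)) (t ((k : ℕ) + 1))} with hGdef
  have hGopen : IsOpen G := by
    rw [hGdef]
    have hGeq : {α : Params w (L' + 1) | ∀ (k : Fin (L' + 1)) (i : Fin (w ((k : ℕ) + 1))),
        ∀ x ∈ K, (∑ j, (α.1 k).1 i j * hiddenOut σ w (L' + 1) α.1 (k : ℕ) k.2.le x j) +
          (α.1 k).2 i ∈ Set.Ioo (s ((k : ℕ) + 1)) (t ((k : ℕ) + 1))}
        = ⋂ (k : Fin (L' + 1)), ⋂ (i : Fin (w ((k : ℕ) + 1))),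
          {α : Params w (L' + 1) | ∀ x ∈ K,
            (∑ j, (α.1 k).1 i j * hiddenOut σ w (L' + 1) α.1 (k : ℕ) k.2.le x j) +
              (α.1 k).2 i ∈ Set.Ioo (s ((k : ℕ) + 1)) (t ((k : ℕ) + 1))} := by
      ext α
      simp only [Set.mem_iInter, Set.mem_setOf_eq]
    rw [hGeq]
    refine isOpen_iInter_of_finite fun k => isOpen_iInter_of_finite fun i => ?_
    refine isOpen_forall_mem_compact hKc (Continuous.add ?_ ?_) isOpen_Ioo
    · refine continuous_finset_sum _ fun j _ => Continuous.mul ?_ ?_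
      · exact (continuous_apply j).comp ((continuous_apply i).comp
          (((continuous_apply k).comp continuous_fst.fst).fst))
      · exact (continuous_apply j).comp
          ((continuous_hiddenOut_pair hσ (k : ℕ) k.2.le).comp
            (continuous_fst.fst.prodMk continuous_snd))
    · exact (continuous_apply i).comp (((continuous_apply k).comp continuous_fst.fst).snd)
  have hᾱG : ᾱ ∈ G := by
    simp only [hGdef, Set.mem_setOf_eq]
    intro k i x hx
    have hpk := hpre (k : ℕ) k.2 x hx i
    rw [hpk]
    exact hmem ((k : ℕ) + 1) x hx
  -- every parameter in G realizes an affine function on K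
  have hGaff : ∀ α, α ∈ G → ∀ k (hk : k ≤ L' + 1),
      ∃ (a : Fin (w k) → Fin (w 0) → ℝ) (c : Fin (w k) → ℝ),
        ∀ x ∈ K, ∀ j, hiddenOut σ w (L' + 1) α.1 k hk x j
          = (∑ j', a j j' * x j') + c j := by
    intro α hα k
    simp only [hGdef, Set.mem_setOf_eq] at hα
    induction k with
    | zero =>
        intro hk
        refine ⟨fun j j' => if j' = j then 1 else 0, fun _ => 0, fun x hx j => ?_⟩
        simp [hiddenOut, ite_mul, Finset.sum_ite_eq']
    | succ k ih =>
        intro hk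
        have hklt : k < L' + 1 := hk
        obtain ⟨a, c, hac⟩ := ih hklt.le
        refine ⟨fun i j' => β (k + 1) * ∑ j, (α.1 ⟨k, hklt⟩).1 i j * a j j',
          fun i => β (k + 1) * ((∑ j, (α.1 ⟨k, hklt⟩).1 i j * c j) + (α.1 ⟨k, hklt⟩).2 i)
            + γ (k + 1), fun x hx i => ?_⟩
        have hmem' := hα ⟨k, hklt⟩ i x hx
        simp only [hiddenOut]
        rw [hsig (k + 1) (by omega) (by omega) _ hmem']
        have hsum : (∑ j, (α.1 ⟨k, hklt⟩).1 i j *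
              hiddenOut σ w (L' + 1) α.1 k hklt.le x j)
            = ∑ j, (α.1 ⟨k, hklt⟩).1 i j * ((∑ j', a j j' * x j') + c j) :=
          Finset.sum_congr rfl fun j _ => by rw [hac x hx j]
        rw [hsum, sum_affine]
        simp only [mul_assoc, ← Finset.mul_sum]
        ring
  obtain ⟨r, hr, hball⟩ := Metric.isOpen_iff.mp hGopen ᾱ hᾱG
  refine ⟨ᾱ, r, hr, hreal, ?_⟩
  intro α hα
  obtain ⟨a, c, hac⟩ := hGaff α (hball hα) (L' + 1) le_rfl
  refine ⟨fun j' => ∑ j, α.2.1 j * a j j', (∑ j, α.2.1 j * c j) + α.2.2, fun x hx => ?_⟩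
  simp only [netFun]
  have hsum : (∑ j, α.2.1 j * hiddenOut σ w (L' + 1) α.1 (L' + 1) le_rfl x j)
      = ∑ j, α.2.1 j * ((∑ j', a j j' * x j') + c j) :=
    Finset.sum_congr rfl fun j _ => by rw [hac x hx j]
  rw [hsum, sum_affine, add_assoc]
end

section
/- Let K ⊂ ℝ^d be a nonempty compact set and let ψ be a feedforward neural network with depth L ∈ ℕ, widths w_i ∈ ℕ, and continuous activation functions σ_i such that σ_j is constant on some nonempty open interval I_j ⊂ ℝ for some j ∈ {1,…,L}. Then for every c̄ ∈ ℝ there exist a parameter ᾱ ∈ D and a radius r > 0 such that ψ(ᾱ, x) = c̄ for all x ∈ K and such that for every α in the open ball of radius r around ᾱ in D the function Ψ(α) is constant on K. -/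
open scoped BigOperators ENNReal NNReal

lemma continuous_hiddenOut_param {σ : ℕ → ℝ → ℝ} {w : ℕ → ℕ} {L : ℕ}
    (hσ : ∀ i, 1 ≤ i → i ≤ L → Continuous (σ i)) :
    ∀ (k : ℕ) (h : k ≤ L),
      Continuous fun p : Params w L × (Fin (w 0) → ℝ) => hiddenOut σ w L p.1.1 k h p.2 := by
  intro k
  induction k with
  | zero =>
      intro h
      simpa [hiddenOut] using
        (continuous_snd : Continuous fun p : Params w L × (Fin (w 0) → ℝ) => p.2)
  | succ k ih =>
      intro h
      apply continuous_pi
      intro i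
      simp only [hiddenOut]
      have hA : ∀ j', Continuous fun p : Params w L × (Fin (w 0) → ℝ) =>
          (p.1.1 ⟨k, h⟩).1 i j' := by
        intro j'; fun_prop
      have hb : Continuous fun p : Params w L × (Fin (w 0) → ℝ) =>
          (p.1.1 ⟨k, h⟩).2 i := by fun_prop
      exact (hσ (k + 1) (Nat.succ_le_succ (Nat.zero_le _)) h).comp
        ((continuous_finset_sum _ fun j' _ =>
          (hA j').mul ((continuous_apply j').comp (ih (Nat.le_of_succ_le h)))).add hb)

lemma hiddenOut_prop {σ : ℕ → ℝ → ℝ} {w : ℕ → ℕ} {L : ℕ}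
    (θ : ∀ i : Fin L, ((Fin (w (i + 1)) → Fin (w i) → ℝ) × (Fin (w (i + 1)) → ℝ)))
    (n : ℕ) (x x' : Fin (w 0) → ℝ) (hn : n ≤ L)
    (hxx : hiddenOut σ w L θ n hn x = hiddenOut σ w L θ n hn x') :
    ∀ (d : ℕ) (h : n + d ≤ L),
      hiddenOut σ w L θ (n + d) h x = hiddenOut σ w L θ (n + d) h x' := by
  intro d
  induction d with
  | zero => intro h; exact hxx
  | succ d ih =>
      intro h
      show hiddenOut σ w L θ ((n + d) + 1) h x = hiddenOut σ w L θ ((n + d) + 1) h x'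
      have H := ih (Nat.le_of_succ_le h)
      funext i
      simp only [hiddenOut, H]

lemma netFun_eq_of_hiddenOut_eq {σ : ℕ → ℝ → ℝ} {w : ℕ → ℕ} {L : ℕ}
    (α : Params w L) (n : ℕ) (hn : n ≤ L) (x x' : Fin (w 0) → ℝ)
    (hxx : hiddenOut σ w L α.1 n hn x = hiddenOut σ w L α.1 n hn x') :
    netFun σ w L α x = netFun σ w L α x' := by
  obtain ⟨d, rfl⟩ := Nat.le.dest hn
  have H := hiddenOut_prop α.1 n x x' hn hxx d le_rfl
  simp only [netFun, H]

/-- **Construction in Lemma 4.5.** If some activation function `σ_j` is constant on a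
nonempty open interval, then every constant function `x ↦ c̄` is realized on `K` by a
parameter `ᾱ ∈ D` such that all parameters in some open ball around `ᾱ` also realize
constant functions on `K`. -/
theorem constant_realization_locally_constant
    (w : ℕ → ℕ) (L : ℕ) (hL : 0 < L) (hw0 : 0 < w 0) (hw : ∀ i, 1 ≤ i → i ≤ L → 0 < w i)
    (σ : ℕ → ℝ → ℝ)
    (hσ : ∀ i, 1 ≤ i → i ≤ L → Continuous (σ i))
    (hconst : ∃ j, 1 ≤ j ∧ j ≤ L ∧ ∃ s t γ : ℝ, s < t ∧
      ∀ x ∈ Set.Ioo s t, σ j x = γ)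
    (K : Set (Fin (w 0) → ℝ)) (hKne : K.Nonempty) (hKc : IsCompact K)
    (cbar : ℝ) :
    ∃ (ᾱ : Params w L) (r : ℝ), 0 < r ∧
      (∀ x ∈ K, netFun σ w L ᾱ x = cbar) ∧
      ∀ α ∈ Metric.ball ᾱ r, ∃ c : ℝ, ∀ x ∈ K, netFun σ w L α x = c := by
  obtain ⟨j, hj1, hjL, s, t, γ, hst, hγ⟩ := hconst
  obtain ⟨k, rfl⟩ : ∃ k, j = k + 1 := ⟨j - 1, by omega⟩
  set m : ℝ := (s + t) / 2 with hm
  have hmI : m ∈ Set.Ioo s t := ⟨by rw [hm]; linarith, by rw [hm]; linarith⟩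
  set ᾱ : Params w L :=
    ⟨fun i => ⟨fun _ _ => 0, fun _ => if (i : ℕ) = k then m else 0⟩,
      ⟨fun _ => 0, cbar⟩⟩ with hᾱ
  have hk1 : k + 1 ≤ L := hjL
  set P : Params w L × (Fin (w 0) → ℝ) → Fin (w (k + 1)) → ℝ := fun p i =>
    (∑ j', (p.1.1 ⟨k, hk1⟩).1 i j' *
      hiddenOut σ w L p.1.1 k (Nat.le_of_succ_le hk1) p.2 j') + (p.1.1 ⟨k, hk1⟩).2 i
    with hP
  have hPcont : ∀ i, Continuous fun p => P p i := by
    intro i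
    have hA : ∀ j', Continuous fun p : Params w L × (Fin (w 0) → ℝ) =>
        (p.1.1 ⟨k, hk1⟩).1 i j' := by intro j'; fun_prop
    have hb : Continuous fun p : Params w L × (Fin (w 0) → ℝ) =>
        (p.1.1 ⟨k, hk1⟩).2 i := by fun_prop
    exact (continuous_finset_sum _ fun j' _ => (hA j').mul
      ((continuous_apply j').comp
        (continuous_hiddenOut_param hσ k (Nat.le_of_succ_le hk1)))).add hb
  set U : Set (Params w L × (Fin (w 0) → ℝ)) :=
    ⋂ i, (fun p => P p i) ⁻¹' Set.Ioo s t with hU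
  have hUopen : IsOpen U := isOpen_iInter_of_finite fun i =>
    isOpen_Ioo.preimage (hPcont i)
  have hsub : ({ᾱ} : Set (Params w L)) ×ˢ K ⊆ U := by
    rintro ⟨α, x⟩ ⟨hα, hx⟩
    simp only [Set.mem_singleton_iff] at hα
    subst hα
    simp only [hU, Set.mem_iInter, Set.mem_preimage]
    intro i
    have : P (ᾱ, x) i = m := by simp [hP, hᾱ]
    rw [this]
    exact hmI
  obtain ⟨V, W, hVopen, _, hV, hW, hVW⟩ :=
    generalized_tube_lemma isCompact_singleton hKc hUopen hsub
  obtain ⟨r, hr, hball⟩ := Metric.isOpen_iff.mp hVopen ᾱ (hV rfl)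
  refine ⟨ᾱ, r, hr, ?_, ?_⟩
  · intro x hx
    simp [netFun, hᾱ]
  · intro α hα
    obtain ⟨x₀, hx₀⟩ := hKne
    have key : ∀ y ∈ K, hiddenOut σ w L α.1 (k + 1) hk1 y = fun _ => γ := by
      intro y hy
      funext i
      have hmem : (α, y) ∈ U := hVW ⟨hball hα, hW hy⟩
      simp only [hU, Set.mem_iInter, Set.mem_preimage, hP] at hmem
      simp only [hiddenOut]
      exact hγ _ (hmem i)
    refine ⟨netFun σ w L α x₀, fun x hx => ?_⟩
    exact netFun_eq_of_hiddenOut_eq α (k + 1) hk1 x x₀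
      ((key x hx).trans (key x₀ hx₀).symm)
end
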